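/- Let B ∈ ℝ^{d×k} with d ≥ k, and let B = Q R be its QR factorization with Q ∈ ℝ^{d×k} having orthonormal columns and R ∈ ℝ^{k×k} upper triangular. For α > 0, if ‖I_k − α BᵀB‖₂ ≤ δ < 1, then ‖Q Qᵀ − α B Bᵀ‖₂ ≤ δ. -/

import Mathlib

open Matrix BigOperators

noncomputable def specNorm {m n : ℕ} (A : Matrix (Fin m) (Fin n) ℝ) : ℝ :=
  sSup {r : ℝ | ∃ v : Fin n → ℝ, ∑ i, v i ^ 2 = 1 ∧ r = Real.sqrt (∑ i, (A.mulVec v) i ^ 2)}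

noncomputable def sMin {m n : ℕ} (A : Matrix (Fin m) (Fin n) ℝ) : ℝ :=
  sInf {r : ℝ | ∃ v : Fin n → ℝ, ∑ i, v i ^ 2 = 1 ∧ r = Real.sqrt (∑ i, (A.mulVec v) i ^ 2)}

namespace SpecAux

lemma dp_nonneg {n : ℕ} (v : Fin n → ℝ) : 0 ≤ v ⬝ᵥ v :=
  Finset.sum_nonneg fun i _ => mul_self_nonneg _

lemma dp_sum {n : ℕ} (v : Fin n → ℝ) : v ⬝ᵥ v = ∑ i, v i ^ 2 := by
  simp [dotProduct, pow_two]

lemma cs_abs {n : ℕ} (v w : Fin n → ℝ) :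
    |v ⬝ᵥ w| ≤ Real.sqrt (v ⬝ᵥ v) * Real.sqrt (w ⬝ᵥ w) := by
  have h := Finset.sum_mul_sq_le_sq_mul_sq Finset.univ v w
  have h2 : (v ⬝ᵥ w) ^ 2 ≤ (v ⬝ᵥ v) * (w ⬝ᵥ w) := by
    rw [dp_sum, dp_sum]; exact h
  calc |v ⬝ᵥ w| = Real.sqrt ((v ⬝ᵥ w) ^ 2) := (Real.sqrt_sq_eq_abs _).symm
    _ ≤ Real.sqrt ((v ⬝ᵥ v) * (w ⬝ᵥ w)) := Real.sqrt_le_sqrt h2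
    _ = Real.sqrt (v ⬝ᵥ v) * Real.sqrt (w ⬝ᵥ w) := Real.sqrt_mul (dp_nonneg v) _

lemma cs {n : ℕ} (v w : Fin n → ℝ) :
    v ⬝ᵥ w ≤ Real.sqrt (v ⬝ᵥ v) * Real.sqrt (w ⬝ᵥ w) :=
  (le_abs_self _).trans (cs_abs v w)

lemma mulVec_dp {m n : ℕ} (M : Matrix (Fin m) (Fin n) ℝ) (x : Fin n → ℝ) (y : Fin m → ℝ) :
    (M.mulVec x) ⬝ᵥ y = x ⬝ᵥ (Mᵀ.mulVec y) := by
  rw [Matrix.dotProduct_mulVec, Matrix.vecMul_transpose]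

/-- if `‖M w‖ ≤ C ‖w‖` for all w then `‖Mᵀ v‖ ≤ C ‖v‖` for all v. -/
lemma adjoint_bound {m n : ℕ} {M : Matrix (Fin m) (Fin n) ℝ} {C : ℝ} (hC : 0 ≤ C)
    (h : ∀ w : Fin n → ℝ, (M.mulVec w) ⬝ᵥ (M.mulVec w) ≤ C ^ 2 * (w ⬝ᵥ w)) :
    ∀ v : Fin m → ℝ, (Mᵀ.mulVec v) ⬝ᵥ (Mᵀ.mulVec v) ≤ C ^ 2 * (v ⬝ᵥ v) := by
  intro v
  set u := Mᵀ.mulVec v with hu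
  have key : u ⬝ᵥ u = v ⬝ᵥ (M.mulVec u) := by
    rw [hu]
    rw [Matrix.dotProduct_mulVec v M u, ← Matrix.mulVec_transpose]
  set a := Real.sqrt (u ⬝ᵥ u) with ha
  set b := Real.sqrt (v ⬝ᵥ v) with hb
  have ha0 : 0 ≤ a := Real.sqrt_nonneg _
  have hb0 : 0 ≤ b := Real.sqrt_nonneg _
  have hua : u ⬝ᵥ u = a ^ 2 := (Real.sq_sqrt (dp_nonneg u)).symm
  have hvb : v ⬝ᵥ v = b ^ 2 := (Real.sq_sqrt (dp_nonneg v)).symm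
  have hMu : Real.sqrt ((M.mulVec u) ⬝ᵥ (M.mulVec u)) ≤ C * a := by
    have := h u
    calc Real.sqrt ((M.mulVec u) ⬝ᵥ (M.mulVec u)) ≤ Real.sqrt (C ^ 2 * (u ⬝ᵥ u)) :=
          Real.sqrt_le_sqrt this
      _ = C * a := by
          rw [Real.sqrt_mul (sq_nonneg C), Real.sqrt_sq hC, ha]
  have step : a ^ 2 ≤ b * (C * a) := by
    calc a ^ 2 = u ⬝ᵥ u := hua.symm
      _ = v ⬝ᵥ (M.mulVec u) := key
      _ ≤ Real.sqrt (v ⬝ᵥ v) * Real.sqrt ((M.mulVec u) ⬝ᵥ (M.mulVec u)) := cs _ _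
      _ ≤ b * (C * a) := by
          apply mul_le_mul_of_nonneg_left hMu hb0
  have haCb : a ≤ C * b := by
    rcases eq_or_lt_of_le ha0 with h0 | h0
    · rw [← h0]; positivity
    · have : a * a ≤ (C * b) * a := by nlinarith
      exact le_of_mul_le_mul_right this h0
  calc u ⬝ᵥ u = a ^ 2 := hua
    _ ≤ (C * b) ^ 2 := by nlinarith
    _ = C ^ 2 * (v ⬝ᵥ v) := by rw [hvb]; ring

/-- lower-bound transfer for square matrices. -/
lemma adjoint_lower {n : ℕ} {M : Matrix (Fin n) (Fin n) ℝ} {c : ℝ} (hc : 0 < c)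
    (h : ∀ w : Fin n → ℝ, c ^ 2 * (w ⬝ᵥ w) ≤ (M.mulVec w) ⬝ᵥ (M.mulVec w)) :
    ∀ v : Fin n → ℝ, c ^ 2 * (v ⬝ᵥ v) ≤ (Mᵀ.mulVec v) ⬝ᵥ (Mᵀ.mulVec v) := by
  have hinj : Function.Injective M.mulVecLin := by
    intro x y hxy
    have hz : M.mulVec (x - y) = 0 := by
      have : M.mulVec x = M.mulVec y := hxy
      rw [Matrix.mulVec_sub, this, sub_self]
    have h1 := h (x - y)
    rw [hz] at h1
    simp only [zero_dotProduct] at h1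
    have h2 : (x - y) ⬝ᵥ (x - y) ≤ 0 := by nlinarith [sq_nonneg c, mul_pos hc hc]
    have h3 : (x - y) ⬝ᵥ (x - y) = 0 := le_antisymm h2 (dp_nonneg _)
    have := dotProduct_self_eq_zero.mp h3
    exact sub_eq_zero.mp this
  have hsurj : Function.Surjective M.mulVecLin :=
    LinearMap.injective_iff_surjective.mp hinj
  intro v
  obtain ⟨w, hw⟩ := hsurj v
  have hw' : M.mulVec w = v := hw
  set u := Mᵀ.mulVec v with hu
  set a := Real.sqrt (u ⬝ᵥ u) with ha
  set b := Real.sqrt (v ⬝ᵥ v) with hb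
  have ha0 : 0 ≤ a := Real.sqrt_nonneg _
  have hb0 : 0 ≤ b := Real.sqrt_nonneg _
  have hua : u ⬝ᵥ u = a ^ 2 := (Real.sq_sqrt (dp_nonneg u)).symm
  have hvb : v ⬝ᵥ v = b ^ 2 := (Real.sq_sqrt (dp_nonneg v)).symm
  have hwb : Real.sqrt (w ⬝ᵥ w) ≤ b / c := by
    have h1 := h w
    rw [hw'] at h1
    have : w ⬝ᵥ w ≤ (b / c) ^ 2 := by
      rw [div_pow]
      rw [le_div_iff₀ (by positivity)]
      nlinarith [hvb]
    calc Real.sqrt (w ⬝ᵥ w) ≤ Real.sqrt ((b / c) ^ 2) := Real.sqrt_le_sqrt this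
      _ = b / c := Real.sqrt_sq (by positivity)
  have key : v ⬝ᵥ v = w ⬝ᵥ u := by
    rw [hu, ← mulVec_dp M w v, hw']
  have step : b ^ 2 ≤ (b / c) * a := by
    calc b ^ 2 = v ⬝ᵥ v := hvb.symm
      _ = w ⬝ᵥ u := key
      _ ≤ Real.sqrt (w ⬝ᵥ w) * Real.sqrt (u ⬝ᵥ u) := cs _ _
      _ ≤ (b / c) * a := mul_le_mul_of_nonneg_right hwb ha0
  have hcb : c * b ≤ a := by
    rcases eq_or_lt_of_le hb0 with h0 | h0
    · rw [← h0]; simpa using ha0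
    · have : (c * b) * b ≤ a * b := by
        have : b * b ≤ (b / c) * a := by nlinarith
        calc (c * b) * b = c * (b * b) := by ring
          _ ≤ c * ((b / c) * a) := by nlinarith
          _ = a * b := by field_simp
      exact le_of_mul_le_mul_right this h0
  calc c ^ 2 * (v ⬝ᵥ v) = (c * b) ^ 2 := by rw [hvb]; ring
    _ ≤ a ^ 2 := pow_le_pow_left₀ (by positivity) hcb 2
    _ = u ⬝ᵥ u := hua.symm

/-- symmetric matrix with quadratic form bounded by δ has norm bounded by δ. -/
lemma sym_quad {n : ℕ} {S : Matrix (Fin n) (Fin n) ℝ} (hS : Sᵀ = S) {δ : ℝ} (hδ : 0 ≤ δ)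
    (h : ∀ w : Fin n → ℝ, |w ⬝ᵥ S.mulVec w| ≤ δ * (w ⬝ᵥ w)) :
    ∀ v : Fin n → ℝ, (S.mulVec v) ⬝ᵥ (S.mulVec v) ≤ δ ^ 2 * (v ⬝ᵥ v) := by
  have polar : ∀ v u : Fin n → ℝ, (S.mulVec v) ⬝ᵥ u ≤ δ / 2 * (v ⬝ᵥ v + u ⬝ᵥ u) := by
    intro v u
    have hsym : v ⬝ᵥ S.mulVec u = (S.mulVec v) ⬝ᵥ u := by
      conv_lhs => rw [← hS]
      rw [Matrix.dotProduct_mulVec, Matrix.vecMul_transpose]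
    have husym : u ⬝ᵥ S.mulVec v = (S.mulVec v) ⬝ᵥ u := dotProduct_comm _ _
    have hexp : (v + u) ⬝ᵥ S.mulVec (v + u) - (v - u) ⬝ᵥ S.mulVec (v - u)
        = 4 * ((S.mulVec v) ⬝ᵥ u) := by
      rw [Matrix.mulVec_add, Matrix.mulVec_sub]
      rw [add_dotProduct, sub_dotProduct, dotProduct_add,
        dotProduct_add, dotProduct_sub, dotProduct_sub]
      rw [hsym, husym]
      ring
    have hpar : (v + u) ⬝ᵥ (v + u) + (v - u) ⬝ᵥ (v - u) = 2 * (v ⬝ᵥ v) + 2 * (u ⬝ᵥ u) := by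
      rw [add_dotProduct, sub_dotProduct, dotProduct_add,
        dotProduct_add, dotProduct_sub, dotProduct_sub,
        dotProduct_comm u v]
      ring
    have h1 := (abs_le.mp (h (v + u))).2
    have h2 := (abs_le.mp (h (v - u))).1
    nlinarith [hexp, hpar]
  intro v
  by_cases hzero : (S.mulVec v) ⬝ᵥ (S.mulVec v) = 0
  · rw [hzero]; exact mul_nonneg (sq_nonneg δ) (dp_nonneg v)
  · have hBq : 0 < (S.mulVec v) ⬝ᵥ (S.mulVec v) :=
      lt_of_le_of_ne (dp_nonneg _) (Ne.symm hzero)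
    have hvne : v ≠ 0 := by
      intro hv
      apply hzero
      rw [hv, Matrix.mulVec_zero]
      simp
    have hA : 0 < v ⬝ᵥ v := by
      rcases eq_or_lt_of_le (dp_nonneg v) with h0 | h0
      · exact absurd (dotProduct_self_eq_zero.mp h0.symm) hvne
      · exact h0
    set a := Real.sqrt (v ⬝ᵥ v) with hadef
    set b := Real.sqrt ((S.mulVec v) ⬝ᵥ (S.mulVec v)) with hbdef
    have ha0 : 0 < a := Real.sqrt_pos.mpr hA
    have hb0 : 0 < b := Real.sqrt_pos.mpr hBq
    have hva : v ⬝ᵥ v = a ^ 2 := (Real.sq_sqrt (dp_nonneg v)).symm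
    have hub : (S.mulVec v) ⬝ᵥ (S.mulVec v) = b ^ 2 := (Real.sq_sqrt (dp_nonneg _)).symm
    set s := Real.sqrt (b / a) with hsdef
    have hs0 : 0 < s := Real.sqrt_pos.mpr (div_pos hb0 ha0)
    have hs2 : s ^ 2 = b / a := Real.sq_sqrt (div_pos hb0 ha0).le
    have happ := polar (s • v) (s⁻¹ • S.mulVec v)
    have hLHS : (S.mulVec (s • v)) ⬝ᵥ (s⁻¹ • S.mulVec v) = b ^ 2 := by
      rw [Matrix.mulVec_smul, smul_dotProduct, dotProduct_smul]
      rw [smul_eq_mul, smul_eq_mul, ← mul_assoc, mul_inv_cancel₀ (ne_of_gt hs0), one_mul]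
      exact hub
    have hsv : (s • v) ⬝ᵥ (s • v) = a * b := by
      rw [smul_dotProduct, dotProduct_smul, smul_eq_mul, smul_eq_mul,
        ← mul_assoc, hva]
      have : s * s = b / a := by nlinarith [hs2]
      rw [this]
      field_simp
    have hsu : (s⁻¹ • S.mulVec v) ⬝ᵥ (s⁻¹ • S.mulVec v) = a * b := by
      rw [smul_dotProduct, dotProduct_smul, smul_eq_mul, smul_eq_mul,
        ← mul_assoc, hub]
      have hss : s * s = b / a := by nlinarith [hs2]
      have : s⁻¹ * s⁻¹ = a / b := by
        rw [← mul_inv]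
        rw [hss]
        rw [inv_div]
      rw [this]
      field_simp
    rw [hLHS, hsv, hsu] at happ
    have hbab : b ^ 2 ≤ δ * (a * b) := by nlinarith
    have : b ≤ δ * a := by
      have : b * b ≤ (δ * a) * b := by nlinarith
      exact le_of_mul_le_mul_right this hb0
    calc (S.mulVec v) ⬝ᵥ (S.mulVec v) = b ^ 2 := hub
      _ ≤ (δ * a) ^ 2 := by nlinarith
      _ = δ ^ 2 * (v ⬝ᵥ v) := by rw [hva]; ring

lemma specSet_bddAbove {m n : ℕ} (A : Matrix (Fin m) (Fin n) ℝ) :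
    BddAbove {r : ℝ | ∃ v : Fin n → ℝ, ∑ i, v i ^ 2 = 1 ∧
      r = Real.sqrt (∑ i, (A.mulVec v) i ^ 2)} := by
  refine ⟨Real.sqrt (∑ i, ∑ j, A i j ^ 2), ?_⟩
  rintro r ⟨v, hv, rfl⟩
  apply Real.sqrt_le_sqrt
  apply Finset.sum_le_sum
  intro i _
  have h := Finset.sum_mul_sq_le_sq_mul_sq Finset.univ (A i) v
  calc (A.mulVec v) i ^ 2 = (∑ j, A i j * v j) ^ 2 := rfl
    _ ≤ (∑ j, A i j ^ 2) * (∑ j, v j ^ 2) := h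
    _ = ∑ j, A i j ^ 2 := by rw [hv, mul_one]

lemma norm_bound {m n : ℕ} {A : Matrix (Fin m) (Fin n) ℝ} {δ : ℝ}
    (hA : specNorm A ≤ δ) (hδ0 : 0 ≤ δ) :
    ∀ v : Fin n → ℝ, (A.mulVec v) ⬝ᵥ (A.mulVec v) ≤ δ ^ 2 * (v ⬝ᵥ v) := by
  have elem : ∀ v : Fin n → ℝ, ∑ i, v i ^ 2 = 1 →
      Real.sqrt (∑ i, (A.mulVec v) i ^ 2) ≤ δ := by
    intro v hv
    exact le_trans (le_csSup (specSet_bddAbove A) ⟨v, hv, rfl⟩) hA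
  intro v
  by_cases hv : v = 0
  · rw [hv, Matrix.mulVec_zero]
    simp
  · have hA0 : 0 < v ⬝ᵥ v := by
      rcases eq_or_lt_of_le (dp_nonneg v) with h0 | h0
      · exact absurd (dotProduct_self_eq_zero.mp h0.symm) hv
      · exact h0
    set a := Real.sqrt (v ⬝ᵥ v) with hadef
    have ha0 : 0 < a := Real.sqrt_pos.mpr hA0
    have hva : v ⬝ᵥ v = a ^ 2 := (Real.sq_sqrt (dp_nonneg v)).symm
    have hv1 : ∑ i, (a⁻¹ • v) i ^ 2 = 1 := by
      simp only [Pi.smul_apply, smul_eq_mul, mul_pow]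
      rw [← Finset.mul_sum, ← dp_sum, hva]
      field_simp
    have he := elem (a⁻¹ • v) hv1
    have hAv : ∑ i, (A.mulVec (a⁻¹ • v)) i ^ 2 = a⁻¹ ^ 2 * ((A.mulVec v) ⬝ᵥ (A.mulVec v)) := by
      rw [Matrix.mulVec_smul]
      simp only [Pi.smul_apply, smul_eq_mul, mul_pow]
      rw [← Finset.mul_sum, ← dp_sum]
    rw [hAv] at he
    have hsq : Real.sqrt (a⁻¹ ^ 2 * ((A.mulVec v) ⬝ᵥ (A.mulVec v)))
        = a⁻¹ * Real.sqrt ((A.mulVec v) ⬝ᵥ (A.mulVec v)) := by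
      rw [Real.sqrt_mul (sq_nonneg _), Real.sqrt_sq (by positivity)]
    rw [hsq] at he
    have hle : Real.sqrt ((A.mulVec v) ⬝ᵥ (A.mulVec v)) ≤ δ * a := by
      have := mul_le_mul_of_nonneg_left he (le_of_lt ha0)
      rw [← mul_assoc, mul_inv_cancel₀ (ne_of_gt ha0), one_mul] at this
      linarith [this]
    have := Real.sq_sqrt (dp_nonneg (A.mulVec v))
    nlinarith [Real.sqrt_nonneg ((A.mulVec v) ⬝ᵥ (A.mulVec v)), hle, hva]

end SpecAux


theorem stmt1 {d k : ℕ} (hk : k ≤ d) (α δ : ℝ) (hα : 0 < α) (hδ : δ < 1)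
    (B Q : Matrix (Fin d) (Fin k) ℝ) (R : Matrix (Fin k) (Fin k) ℝ)
    (hQR : B = Q * R) (hQ : Qᵀ * Q = 1) (hR : R.BlockTriangular id)
    (hB : specNorm ((1 : Matrix (Fin k) (Fin k) ℝ) - α • (Bᵀ * B)) ≤ δ) :
    specNorm (Q * Qᵀ - α • (B * Bᵀ)) ≤ δ := by
  have hδ0 : 0 ≤ δ := by
    refine le_trans ?_ hB
    unfold specNorm
    exact Real.sSup_nonneg fun x hx => by
      obtain ⟨v, hv, rfl⟩ := hx; exact Real.sqrt_nonneg _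
  have hPnorm := SpecAux.norm_bound hB hδ0
  have hQiso : ∀ x : Fin k → ℝ, (Q.mulVec x) ⬝ᵥ (Q.mulVec x) = x ⬝ᵥ x := by
    intro x
    rw [SpecAux.mulVec_dp, Matrix.mulVec_mulVec, hQ, Matrix.one_mulVec]
  have hBdp : ∀ v : Fin k → ℝ,
      v ⬝ᵥ ((Bᵀ * B).mulVec v) = (B.mulVec v) ⬝ᵥ (B.mulVec v) := by
    intro v
    rw [← Matrix.mulVec_mulVec, ← SpecAux.mulVec_dp]
  have hquadP : ∀ v : Fin k → ℝ,
      |v ⬝ᵥ v - α * ((B.mulVec v) ⬝ᵥ (B.mulVec v))| ≤ δ * (v ⬝ᵥ v) := by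
    intro v
    have hPv : v ⬝ᵥ (((1 : Matrix (Fin k) (Fin k) ℝ) - α • (Bᵀ * B)).mulVec v)
        = v ⬝ᵥ v - α * ((B.mulVec v) ⬝ᵥ (B.mulVec v)) := by
      rw [Matrix.sub_mulVec, Matrix.one_mulVec, dotProduct_sub,
        Matrix.smul_mulVec, dotProduct_smul, smul_eq_mul, hBdp]
    have h1 := SpecAux.cs_abs v (((1 : Matrix (Fin k) (Fin k) ℝ) - α • (Bᵀ * B)).mulVec v)
    have h2 : Real.sqrt ((((1 : Matrix (Fin k) (Fin k) ℝ) - α • (Bᵀ * B)).mulVec v) ⬝ᵥ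
        (((1 : Matrix (Fin k) (Fin k) ℝ) - α • (Bᵀ * B)).mulVec v))
        ≤ δ * Real.sqrt (v ⬝ᵥ v) := by
      calc _ ≤ Real.sqrt (δ ^ 2 * (v ⬝ᵥ v)) := Real.sqrt_le_sqrt (hPnorm v)
        _ = δ * Real.sqrt (v ⬝ᵥ v) := by
            rw [Real.sqrt_mul (sq_nonneg δ), Real.sqrt_sq hδ0]
    rw [hPv] at h1
    have h3 : Real.sqrt (v ⬝ᵥ v) * Real.sqrt (v ⬝ᵥ v) = v ⬝ᵥ v :=
      Real.mul_self_sqrt (SpecAux.dp_nonneg v)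
    calc |v ⬝ᵥ v - α * ((B.mulVec v) ⬝ᵥ (B.mulVec v))|
        ≤ Real.sqrt (v ⬝ᵥ v) * (δ * Real.sqrt (v ⬝ᵥ v)) := by
          refine h1.trans ?_
          exact mul_le_mul_of_nonneg_left h2 (Real.sqrt_nonneg _)
      _ = δ * (Real.sqrt (v ⬝ᵥ v) * Real.sqrt (v ⬝ᵥ v)) := by ring
      _ = δ * (v ⬝ᵥ v) := by rw [h3]
  have hRq : ∀ v : Fin k → ℝ,
      (R.mulVec v) ⬝ᵥ (R.mulVec v) = (B.mulVec v) ⬝ᵥ (B.mulVec v) := by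
    intro v
    rw [hQR, ← Matrix.mulVec_mulVec, hQiso]
  have hcl0 : 0 < Real.sqrt ((1 - δ) / α) :=
    Real.sqrt_pos.mpr (div_pos (by linarith) hα)
  have hRup : ∀ v : Fin k → ℝ,
      (R.mulVec v) ⬝ᵥ (R.mulVec v) ≤ Real.sqrt ((1 + δ) / α) ^ 2 * (v ⬝ᵥ v) := by
    intro v
    have h1 := (abs_le.mp (hquadP v)).1
    rw [hRq, Real.sq_sqrt (by positivity), div_mul_eq_mul_div, le_div_iff₀ hα]
    nlinarith [h1]
  have hRlow : ∀ v : Fin k → ℝ,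
      Real.sqrt ((1 - δ) / α) ^ 2 * (v ⬝ᵥ v) ≤ (R.mulVec v) ⬝ᵥ (R.mulVec v) := by
    intro v
    have h1 := (abs_le.mp (hquadP v)).2
    rw [hRq, Real.sq_sqrt (le_of_lt (div_pos (by linarith) hα)), div_mul_eq_mul_div,
      div_le_iff₀ hα]
    nlinarith [h1]
  have hRTup := SpecAux.adjoint_bound (Real.sqrt_nonneg _) hRup
  have hRTlow := SpecAux.adjoint_lower hcl0 hRlow
  set S : Matrix (Fin k) (Fin k) ℝ := 1 - α • (R * Rᵀ) with hSdef
  have hSsym : Sᵀ = S := by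
    rw [hSdef, Matrix.transpose_sub, Matrix.transpose_one, Matrix.transpose_smul,
      Matrix.transpose_mul, Matrix.transpose_transpose]
  have hSquad : ∀ w : Fin k → ℝ, |w ⬝ᵥ S.mulVec w| ≤ δ * (w ⬝ᵥ w) := by
    intro w
    have hSw : w ⬝ᵥ S.mulVec w
        = w ⬝ᵥ w - α * ((Rᵀ.mulVec w) ⬝ᵥ (Rᵀ.mulVec w)) := by
      rw [hSdef, Matrix.sub_mulVec, Matrix.one_mulVec, dotProduct_sub,
        Matrix.smul_mulVec, dotProduct_smul, smul_eq_mul]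
      congr 1
      rw [← Matrix.mulVec_mulVec, dotProduct_comm, SpecAux.mulVec_dp]
    have hup := hRTup w
    have hlow := hRTlow w
    rw [hSw]
    have hup' : α * ((Rᵀ.mulVec w) ⬝ᵥ (Rᵀ.mulVec w)) ≤ (1 + δ) * (w ⬝ᵥ w) := by
      have h := mul_le_mul_of_nonneg_left hup hα.le
      rw [Real.sq_sqrt (by positivity)] at h
      have he : α * ((1 + δ) / α * (w ⬝ᵥ w)) = (1 + δ) * (w ⬝ᵥ w) := by
        field_simp
      linarith
    have hlow' : (1 - δ) * (w ⬝ᵥ w) ≤ α * ((Rᵀ.mulVec w) ⬝ᵥ (Rᵀ.mulVec w)) := by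
      have h := mul_le_mul_of_nonneg_left hlow hα.le
      rw [Real.sq_sqrt (le_of_lt (div_pos (by linarith) hα))] at h
      have he : α * ((1 - δ) / α * (w ⬝ᵥ w)) = (1 - δ) * (w ⬝ᵥ w) := by
        field_simp
      linarith
    rw [abs_le]
    constructor
    · linarith
    · linarith
  have hSnorm := SpecAux.sym_quad hSsym hδ0 hSquad
  have hQTcontr : ∀ u : Fin d → ℝ,
      (Qᵀ.mulVec u) ⬝ᵥ (Qᵀ.mulVec u) ≤ u ⬝ᵥ u := by
    intro u
    have h1 : ∀ w : Fin k → ℝ,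
        (Q.mulVec w) ⬝ᵥ (Q.mulVec w) ≤ (1 : ℝ) ^ 2 * (w ⬝ᵥ w) := by
      intro w; rw [hQiso w, one_pow, one_mul]
    have := SpecAux.adjoint_bound (by norm_num) h1 u
    simpa using this
  have hG : Q * Qᵀ - α • (B * Bᵀ) = Q * S * Qᵀ := by
    rw [hSdef, hQR, Matrix.transpose_mul]
    rw [Matrix.mul_sub, Matrix.sub_mul, Matrix.mul_one]
    congr 1
    rw [Matrix.mul_smul, Matrix.smul_mul]
    congr 1
    rw [← Matrix.mul_assoc, ← Matrix.mul_assoc, Matrix.mul_assoc (Q * R)]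
  unfold specNorm
  apply Real.sSup_le _ hδ0
  rintro r ⟨v, hv, rfl⟩
  have hvd : v ⬝ᵥ v = 1 := by rw [SpecAux.dp_sum]; exact hv
  have hGv : (Q * Qᵀ - α • (B * Bᵀ)).mulVec v
      = Q.mulVec (S.mulVec (Qᵀ.mulVec v)) := by
    rw [hG, Matrix.mulVec_mulVec, Matrix.mulVec_mulVec]
  have key : ∑ i, ((Q * Qᵀ - α • (B * Bᵀ)).mulVec v) i ^ 2 ≤ δ ^ 2 := by
    rw [← SpecAux.dp_sum, hGv, hQiso]
    calc (S.mulVec (Qᵀ.mulVec v)) ⬝ᵥ (S.mulVec (Qᵀ.mulVec v))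
        ≤ δ ^ 2 * ((Qᵀ.mulVec v) ⬝ᵥ (Qᵀ.mulVec v)) := hSnorm _
      _ ≤ δ ^ 2 * (v ⬝ᵥ v) :=
          mul_le_mul_of_nonneg_left (hQTcontr v) (sq_nonneg δ)
      _ = δ ^ 2 := by rw [hvd, mul_one]
  calc Real.sqrt (∑ i, ((Q * Qᵀ - α • (B * Bᵀ)).mulVec v) i ^ 2)
      ≤ Real.sqrt (δ ^ 2) := Real.sqrt_le_sqrt key
    _ = δ := Real.sqrt_sq hδ0
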